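/- Let n ∈ ℕ, 0 < s < n, and q > n/s. Then there exists a constant C > 0 (depending on n, s, q) such that for every measurable function g on ℝ^n, the weak Lorentz norm ‖ g(y)/(1+|y|)^s ‖_{L^{n/s,∞}(ℝ^n)} ≤ C · M_{L^q} g(0), where M_{L^q} g(0) = sup_{r>0} ( (1/|B(0,r)|) ∫_{B(0,r)} |g|^q )^{1/q}. -/

import Mathlib

open MeasureTheory Metric Set
open scoped ENNReal

/-- Weak Lorentz quasi-norm `‖f‖_{L^{p,∞}} = sup_{λ>0} λ |{|f|>λ}|^{1/p}`. -/
noncomputable def weakLorentzNorm {n : ℕ} (f : EuclideanSpace ℝ (Fin n) → ℝ) (p : ℝ) : ℝ≥0∞ :=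
  ⨆ (l : ℝ) (_ : 0 < l), ENNReal.ofReal l * (volume {x | l < |f x|}) ^ (1 / p)

/-- Centered `L^q` maximal function `M_{L^q} f x`. -/
noncomputable def maxLq {n : ℕ} (f : EuclideanSpace ℝ (Fin n) → ℝ) (q : ℝ)
    (x : EuclideanSpace ℝ (Fin n)) : ℝ≥0∞ :=
  ⨆ (r : ℝ) (_ : 0 < r),
    ((volume (ball x r))⁻¹ * ∫⁻ y in ball x r, ENNReal.ofReal (|f y| ^ q)) ^ (1 / q)

/-- Dyadic localisation: every `a ≥ 1` lies in some `[2^k, 2^(k+1))`. -/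
lemma my_exists_dyadic {a : ℝ} (ha : 1 ≤ a) : ∃ k : ℕ, (2:ℝ) ^ k ≤ a ∧ a < 2 ^ (k + 1) := by
  have ha0 : 0 < a := lt_of_lt_of_le one_pos ha
  refine ⟨⌊Real.logb 2 a⌋₊, ?_, ?_⟩
  · have h := Nat.floor_le (Real.logb_nonneg (b := 2) (by norm_num) ha)
    calc (2:ℝ) ^ ⌊Real.logb 2 a⌋₊ = (2:ℝ) ^ ((⌊Real.logb 2 a⌋₊ : ℝ)) :=
          (Real.rpow_natCast 2 _).symm
      _ ≤ (2:ℝ) ^ Real.logb 2 a := Real.rpow_le_rpow_of_exponent_le (by norm_num) h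
      _ = a := Real.rpow_logb (by norm_num) (by norm_num) ha0
  · have h := Nat.lt_floor_add_one (Real.logb 2 a)
    calc a = (2:ℝ) ^ Real.logb 2 a := (Real.rpow_logb (by norm_num) (by norm_num) ha0).symm
      _ < (2:ℝ) ^ (((⌊Real.logb 2 a⌋₊ + 1 : ℕ) : ℝ)) := by
          apply Real.rpow_lt_rpow_of_exponent_lt (by norm_num)
          push_cast
          linarith
      _ = 2 ^ (⌊Real.logb 2 a⌋₊ + 1) := Real.rpow_natCast 2 _

/-- Chebyshev with the `L^q` maximal function. -/
lemma my_cheb {n : ℕ} {g : EuclideanSpace ℝ (Fin n) → ℝ} (hg : Measurable g)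
    {q : ℝ} (hq : 0 < q) {t r : ℝ} (ht : 0 < t) (hr : 0 < r) :
    volume ({x | t < |g x|} ∩ ball (0:EuclideanSpace ℝ (Fin n)) r)
      ≤ (ENNReal.ofReal (t ^ q))⁻¹ *
        ((maxLq g q 0) ^ q * volume (ball (0:EuclideanSpace ℝ (Fin n)) r)) := by
  set B : Set (EuclideanSpace ℝ (Fin n)) := ball 0 r
  have hB0 : volume B ≠ 0 := (measure_ball_pos volume 0 hr).ne'
  have hBt : volume B ≠ ⊤ := measure_ball_lt_top.ne
  set M := maxLq g q 0 with hM
  have hIle : ((volume B)⁻¹ * ∫⁻ y in B, ENNReal.ofReal (|g y| ^ q)) ^ (1/q) ≤ M := by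
    rw [hM, maxLq]
    exact le_iSup₂ (f := fun (r : ℝ) (_ : 0 < r) =>
      ((volume (ball (0:EuclideanSpace ℝ (Fin n)) r))⁻¹ *
        ∫⁻ y in ball (0:EuclideanSpace ℝ (Fin n)) r, ENNReal.ofReal (|g y| ^ q)) ^ (1 / q)) r hr
  have hIle2 : (volume B)⁻¹ * ∫⁻ y in B, ENNReal.ofReal (|g y| ^ q) ≤ M ^ q := by
    have := ENNReal.rpow_le_rpow hIle (le_of_lt hq)
    rwa [← ENNReal.rpow_mul, one_div, inv_mul_cancel₀ hq.ne', ENNReal.rpow_one] at this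
  have hI : (∫⁻ y in B, ENNReal.ofReal (|g y| ^ q)) ≤ M ^ q * volume B := by
    have := mul_le_mul_left hIle2 (volume B)
    rwa [mul_comm ((volume B)⁻¹) _, mul_assoc, ENNReal.inv_mul_cancel hB0 hBt, mul_one] at this
  have hset : {x | t < |g x|} ∩ B ⊆
      {x | ENNReal.ofReal (t ^ q) ≤ ENNReal.ofReal (|g x| ^ q)} ∩ B := by
    intro x hx
    exact ⟨ENNReal.ofReal_le_ofReal (Real.rpow_le_rpow ht.le hx.1.le hq.le), hx.2⟩
  have hmeas : MeasurableSet {x | ENNReal.ofReal (t ^ q) ≤ ENNReal.ofReal (|g x| ^ q)} := by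
    apply measurableSet_le measurable_const
    exact (hg.abs.pow_const q).ennreal_ofReal
  have hcheb : ENNReal.ofReal (t ^ q) * volume ({x | t < |g x|} ∩ B)
      ≤ ∫⁻ y in B, ENNReal.ofReal (|g y| ^ q) := by
    calc ENNReal.ofReal (t ^ q) * volume ({x | t < |g x|} ∩ B)
        ≤ ENNReal.ofReal (t ^ q) *
            (volume.restrict B) {x | ENNReal.ofReal (t ^ q) ≤ ENNReal.ofReal (|g x| ^ q)} := by
          refine mul_le_mul_right ?_ _
          rw [Measure.restrict_apply hmeas]
          exact measure_mono hset
      _ ≤ _ := mul_meas_ge_le_lintegral₀ ((hg.abs.pow_const q).ennreal_ofReal.aemeasurable) _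
  rw [mul_comm] at hcheb
  rw [← ENNReal.le_div_iff_mul_le (Or.inl (by simp [Real.rpow_pos_of_pos ht q]))
    (Or.inl ENNReal.ofReal_ne_top)] at hcheb
  calc volume ({x | t < |g x|} ∩ B)
      ≤ (∫⁻ y in B, ENNReal.ofReal (|g y| ^ q)) / ENNReal.ofReal (t ^ q) := hcheb
    _ ≤ (M ^ q * volume B) / ENNReal.ofReal (t ^ q) := by gcongr
    _ = _ := by rw [div_eq_mul_inv, mul_comm]

/-- The key real-number computation for the dyadic pieces. -/
lemma my_key_eq {s q l m : ℝ} (n : ℕ) (hs0 : 0 < s) (hl : 0 < l) (hm : 0 < m) (k : ℕ) :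
    ((l * ((m/l) ^ (1/s) * 2 ^ k) ^ s) ^ q)⁻¹ * (m ^ q * ((m/l) ^ (1/s) * 2 ^ (k + 1)) ^ n)
      = (m/l) ^ ((n:ℝ)/s) * ((2:ℝ) ^ n * ((2:ℝ) ^ ((n:ℝ) - s * q)) ^ k) := by
  have hu : 0 < m / l := div_pos hm hl
  have h2 : (0:ℝ) < 2 := two_pos
  have hRs : ((m/l) ^ (1/s)) ^ s = m/l := by
    rw [← Real.rpow_mul hu.le, one_div_mul_cancel hs0.ne', Real.rpow_one]
  have h1 : l * ((m/l) ^ (1/s) * (2:ℝ)^k) ^ s = m * ((2:ℝ)^k) ^ s := by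
    rw [Real.mul_rpow (Real.rpow_pos_of_pos hu _).le (by positivity), hRs]
    field_simp
  have hA : (m * ((2:ℝ)^k) ^ s) ^ q = m ^ q * (2:ℝ) ^ ((k:ℝ) * (s * q)) := by
    rw [Real.mul_rpow hm.le (by positivity), ← Real.rpow_natCast (2:ℝ) k,
      ← Real.rpow_mul h2.le, ← Real.rpow_mul h2.le, mul_assoc]
  have hB : ((m/l) ^ (1/s) * (2:ℝ) ^ (k+1)) ^ n
      = (m/l) ^ ((n:ℝ)/s) * (2:ℝ) ^ (((k:ℝ)+1) * (n:ℝ)) := by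
    rw [mul_pow, ← Real.rpow_natCast ((m/l) ^ (1/s)) n, ← Real.rpow_mul hu.le,
      ← Real.rpow_natCast ((2:ℝ) ^ (k+1)) n, ← Real.rpow_natCast (2:ℝ) (k+1),
      ← Real.rpow_mul h2.le]
    push_cast
    rw [show 1/s * (n:ℝ) = (n:ℝ)/s by ring]
  have hC : ((2:ℝ) ^ ((n:ℝ) - s * q)) ^ k = (2:ℝ) ^ (((n:ℝ) - s * q) * (k:ℝ)) := by
    rw [← Real.rpow_natCast ((2:ℝ) ^ ((n:ℝ) - s*q)) k, ← Real.rpow_mul h2.le]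
  have hD : ((2:ℝ) ^ n : ℝ) = (2:ℝ) ^ ((n:ℝ)) := (Real.rpow_natCast 2 n).symm
  rw [h1, inv_mul_eq_iff_eq_mul₀ (by positivity), hA, hB, hC, hD, ← Real.rpow_add h2]
  have hsplit : (2:ℝ) ^ (((k:ℝ)+1) * (n:ℝ))
      = (2:ℝ) ^ ((k:ℝ) * (s * q)) * (2:ℝ) ^ ((n:ℝ) + ((n:ℝ) - s * q) * (k:ℝ)) := by
    rw [← Real.rpow_add h2]
    congr 1
    ring
  linear_combination (m ^ q * (m/l) ^ ((n:ℝ)/s)) * hsplit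

theorem statement0 (n : ℕ) (hn : 0 < n) (s q : ℝ) (hs0 : 0 < s) (hsn : s < n)
    (hq : (n : ℝ) / s < q) :
    ∃ C : ℝ, 0 < C ∧ ∀ g : EuclideanSpace ℝ (Fin n) → ℝ, Measurable g →
      weakLorentzNorm (fun y => g y / (1 + ‖y‖) ^ s) ((n : ℝ) / s)
        ≤ ENNReal.ofReal C * maxLq g q 0 := by
  haveI : Nonempty (Fin n) := ⟨⟨0, hn⟩⟩
  haveI : Nontrivial (EuclideanSpace ℝ (Fin n)) := by
    infer_instance
  set p : ℝ := (n:ℝ) / s with hp_def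
  have hp : 0 < p := div_pos (by exact_mod_cast hn) hs0
  have hq0 : 0 < q := lt_trans hp hq
  have hnsq : (n:ℝ) < s * q := by
    have := (div_lt_iff₀ hs0).mp hq
    linarith
  set ρ : ℝ := (2:ℝ) ^ ((n:ℝ) - s * q) with hρ_def
  have hρ0 : 0 < ρ := Real.rpow_pos_of_pos (by norm_num) _
  have hρ1 : ρ < 1 := Real.rpow_lt_one_of_one_lt_of_neg (by norm_num) (by linarith)
  set v₁ : ℝ≥0∞ := volume (ball (0:EuclideanSpace ℝ (Fin n)) 1) with hv₁_def
  have hv₁0 : v₁ ≠ 0 := (measure_ball_pos volume 0 one_pos).ne'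
  have hv₁t : v₁ ≠ ⊤ := measure_ball_lt_top.ne
  set K : ℝ≥0∞ := v₁ + ENNReal.ofReal ((2:ℝ) ^ n) * (1 - ENNReal.ofReal ρ)⁻¹ * v₁ with hK_def
  have hsub0 : (1 : ℝ≥0∞) - ENNReal.ofReal ρ ≠ 0 := by
    have : ENNReal.ofReal ρ < 1 := by
      rw [← ENNReal.ofReal_one]
      exact ENNReal.ofReal_lt_ofReal_iff_of_nonneg hρ0.le |>.mpr hρ1
    exact (tsub_pos_of_lt this).ne'
  have hKt : K ≠ ⊤ := by
    apply ENNReal.add_ne_top.mpr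
    refine ⟨hv₁t, ENNReal.mul_ne_top (ENNReal.mul_ne_top ENNReal.ofReal_ne_top
      (ENNReal.inv_ne_top.mpr hsub0)) hv₁t⟩
  set C : ℝ := max 1 ((K ^ (1/p)).toReal) with hC_def
  have hC : 0 < C := lt_of_lt_of_le one_pos (le_max_left _ _)
  have hKC : K ^ (1/p) ≤ ENNReal.ofReal C := by
    have hfin : K ^ (1/p) ≠ ⊤ := ENNReal.rpow_ne_top_of_nonneg (by positivity) hKt
    rw [← ENNReal.ofReal_toReal hfin]
    exact ENNReal.ofReal_le_ofReal (le_max_right _ _)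
  refine ⟨C, hC, ?_⟩
  intro g hg
  set M := maxLq g q 0 with hM_def
  rw [weakLorentzNorm]
  apply iSup₂_le
  intro l hl
  set E : Set (EuclideanSpace ℝ (Fin n)) := {x | l < |g x / (1 + ‖x‖) ^ s|} with hE_def
  have hEsub : ∀ x ∈ E, l * (1 + ‖x‖) ^ s < |g x| := by
    intro x hx
    have hc : (0:ℝ) < (1 + ‖x‖) ^ s :=
      Real.rpow_pos_of_pos (by linarith [norm_nonneg x]) s
    have : l < |g x| / (1 + ‖x‖) ^ s := by
      have := hx
      rw [hE_def] at this
      simpa [abs_div, abs_of_pos hc] using this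
    calc l * (1 + ‖x‖) ^ s < (|g x| / (1 + ‖x‖) ^ s) * (1 + ‖x‖) ^ s := by
          exact mul_lt_mul_of_pos_right this hc
      _ = |g x| := div_mul_cancel₀ _ hc.ne'
  show ENNReal.ofReal l * (volume E) ^ (1 / p) ≤ ENNReal.ofReal C * M
  rcases eq_top_or_lt_top M with hMtop | hMlt
  · rw [hMtop, ENNReal.mul_top (ENNReal.ofReal_pos.mpr hC).ne']
    exact le_top
  rcases eq_or_ne M 0 with hM0 | hMne
  · -- maximal function vanishes: g = 0 a.e., measure of E is zero
    have hES : E ⊆ {x | l < |g x|} := by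
      intro x hx
      have h1 : (1:ℝ) ≤ (1 + ‖x‖) ^ s :=
        Real.one_le_rpow (by linarith [norm_nonneg x]) hs0.le
      have := hEsub x hx
      have hll : l ≤ l * (1 + ‖x‖) ^ s := le_mul_of_one_le_right hl.le h1
      exact lt_of_le_of_lt hll this
    have hzero : ∀ j : ℕ, volume ({x | l < |g x|} ∩ ball (0:EuclideanSpace ℝ (Fin n)) (j+1)) = 0 := by
      intro j
      have := my_cheb hg hq0 hl (by positivity : (0:ℝ) < (j:ℝ)+1)
      rw [← hM_def, hM0, ENNReal.zero_rpow_of_pos hq0, zero_mul, mul_zero] at this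
      exact le_antisymm this zero_le
    have hcover : {x : EuclideanSpace ℝ (Fin n) | l < |g x|} ⊆
        ⋃ j : ℕ, ({x | l < |g x|} ∩ ball (0:EuclideanSpace ℝ (Fin n)) (j+1)) := by
      intro x hx
      obtain ⟨j, hj⟩ := exists_nat_gt ‖x‖
      exact mem_iUnion.mpr ⟨j, hx, mem_ball_zero_iff.mpr (by push_cast; linarith)⟩
    have hS0 : volume {x : EuclideanSpace ℝ (Fin n) | l < |g x|} = 0 := by
      refine le_antisymm ?_ zero_le
      calc volume {x : EuclideanSpace ℝ (Fin n) | l < |g x|}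
          ≤ volume (⋃ j : ℕ, ({x | l < |g x|} ∩ ball (0:EuclideanSpace ℝ (Fin n)) (j+1))) :=
            measure_mono hcover
        _ ≤ ∑' j : ℕ, volume ({x | l < |g x|} ∩ ball (0:EuclideanSpace ℝ (Fin n)) (j+1)) :=
            measure_iUnion_le _
        _ = 0 := by simp [hzero]
    have hE0 : volume E = 0 := le_antisymm ((measure_mono hES).trans hS0.le) zero_le
    rw [hE0, ENNReal.zero_rpow_of_pos (by positivity), mul_zero]
    exact zero_le
  -- main case : 0 < M < ∞
  set m : ℝ := M.toReal with hm_def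
  have hm : 0 < m := ENNReal.toReal_pos hMne hMlt.ne
  have hMm : M = ENNReal.ofReal m := (ENNReal.ofReal_toReal hMlt.ne).symm
  set u : ℝ := m / l with hu_def
  have hu : 0 < u := div_pos hm hl
  set R₀ : ℝ := u ^ (1/s) with hR₀_def
  have hR₀ : 0 < R₀ := Real.rpow_pos_of_pos hu _
  -- covering of E
  have hcover : E ⊆ ball (0:EuclideanSpace ℝ (Fin n)) R₀ ∪
      ⋃ k : ℕ, ({x | l * (R₀ * 2 ^ k) ^ s < |g x|} ∩
        ball (0:EuclideanSpace ℝ (Fin n)) (R₀ * 2 ^ (k+1))) := by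
    intro x hx
    have hgx := hEsub x hx
    by_cases hxR : 1 + ‖x‖ < R₀
    · exact Or.inl (mem_ball_zero_iff.mpr (by linarith [norm_nonneg x]))
    · right
      push_neg at hxR
      have h1 : (1:ℝ) ≤ (1 + ‖x‖) / R₀ := (one_le_div hR₀).mpr hxR
      obtain ⟨k, hk1, hk2⟩ := my_exists_dyadic h1
      have hk1' : R₀ * 2 ^ k ≤ 1 + ‖x‖ := by
        rw [le_div_iff₀ hR₀] at hk1
        linarith [hk1]
      have hk2' : 1 + ‖x‖ < R₀ * 2 ^ (k+1) := by
        rw [div_lt_iff₀ hR₀] at hk2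
        linarith [hk2]
      refine mem_iUnion.mpr ⟨k, ?_, mem_ball_zero_iff.mpr (by linarith [norm_nonneg x])⟩
      show l * (R₀ * 2 ^ k) ^ s < |g x|
      refine lt_of_le_of_lt ?_ hgx
      exact mul_le_mul_of_nonneg_left
        (Real.rpow_le_rpow (by positivity) hk1' hs0.le) hl.le
  -- volume estimate
  have hballR₀ : volume (ball (0:EuclideanSpace ℝ (Fin n)) R₀) = ENNReal.ofReal (u ^ p) * v₁ := by
    rw [Measure.addHaar_ball volume 0 hR₀.le, finrank_euclideanSpace_fin, hv₁_def]
    congr 2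
    rw [hR₀_def, ← Real.rpow_natCast (u ^ (1/s)) n, ← Real.rpow_mul hu.le]
    rw [hp_def]
    ring
  have hterm : ∀ k : ℕ,
      volume ({x | l * (R₀ * 2 ^ k) ^ s < |g x|} ∩
        ball (0:EuclideanSpace ℝ (Fin n)) (R₀ * 2 ^ (k+1)))
      ≤ ENNReal.ofReal (u ^ p) * (ENNReal.ofReal ((2:ℝ) ^ n) * (ENNReal.ofReal ρ) ^ k) * v₁ := by
    intro k
    have htk : (0:ℝ) < l * (R₀ * 2 ^ k) ^ s := by positivity
    have hrk : (0:ℝ) < R₀ * 2 ^ (k+1) := by positivity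
    calc volume ({x | l * (R₀ * 2 ^ k) ^ s < |g x|} ∩
          ball (0:EuclideanSpace ℝ (Fin n)) (R₀ * 2 ^ (k+1)))
        ≤ (ENNReal.ofReal ((l * (R₀ * 2 ^ k) ^ s) ^ q))⁻¹ *
            (M ^ q * volume (ball (0:EuclideanSpace ℝ (Fin n)) (R₀ * 2 ^ (k+1)))) :=
          my_cheb hg hq0 htk hrk
      _ = ENNReal.ofReal (((l * (R₀ * 2 ^ k) ^ s) ^ q)⁻¹ *
            (m ^ q * ((R₀ * 2 ^ (k+1)) ^ n))) * v₁ := by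
          rw [Measure.addHaar_ball volume 0 hrk.le, finrank_euclideanSpace_fin, ← hv₁_def,
            hMm, ENNReal.ofReal_rpow_of_pos hm,
            ENNReal.ofReal_mul (by positivity : (0:ℝ) ≤ ((l * (R₀ * 2 ^ k) ^ s) ^ q)⁻¹),
            ENNReal.ofReal_mul (by positivity : (0:ℝ) ≤ m ^ q),
            ENNReal.ofReal_inv_of_pos (Real.rpow_pos_of_pos htk q)]
          ring
      _ = ENNReal.ofReal (u ^ p * ((2:ℝ) ^ n * ρ ^ k)) * v₁ := by
          rw [hR₀_def, hu_def]
          rw [my_key_eq n hs0 hl hm k]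
      _ = ENNReal.ofReal (u ^ p) * (ENNReal.ofReal ((2:ℝ) ^ n) * (ENNReal.ofReal ρ) ^ k) * v₁ := by
          rw [ENNReal.ofReal_mul (by positivity), ENNReal.ofReal_mul (by positivity),
            ENNReal.ofReal_pow hρ0.le]
  have hvol : volume E ≤ ENNReal.ofReal (u ^ p) * K := by
    calc volume E
        ≤ volume (ball (0:EuclideanSpace ℝ (Fin n)) R₀ ∪
            ⋃ k : ℕ, ({x | l * (R₀ * 2 ^ k) ^ s < |g x|} ∩
              ball (0:EuclideanSpace ℝ (Fin n)) (R₀ * 2 ^ (k+1)))) := measure_mono hcover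
      _ ≤ volume (ball (0:EuclideanSpace ℝ (Fin n)) R₀) +
            ∑' k : ℕ, volume ({x | l * (R₀ * 2 ^ k) ^ s < |g x|} ∩
              ball (0:EuclideanSpace ℝ (Fin n)) (R₀ * 2 ^ (k+1))) :=
          (measure_union_le _ _).trans (by gcongr; exact measure_iUnion_le _)
      _ ≤ ENNReal.ofReal (u ^ p) * v₁ +
            ∑' k : ℕ, ENNReal.ofReal (u ^ p) * (ENNReal.ofReal ((2:ℝ) ^ n) *
              (ENNReal.ofReal ρ) ^ k) * v₁ := by
          rw [hballR₀]
          gcongr with k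
          exact hterm k
      _ = ENNReal.ofReal (u ^ p) * K := by
          rw [ENNReal.tsum_mul_right, ENNReal.tsum_mul_left, ENNReal.tsum_mul_left,
            ENNReal.tsum_geometric, hK_def]
          ring
  -- conclude
  have hrpow : (volume E) ^ (1/p) ≤ ENNReal.ofReal u * K ^ (1/p) := by
    calc (volume E) ^ (1/p) ≤ (ENNReal.ofReal (u ^ p) * K) ^ (1/p) :=
          ENNReal.rpow_le_rpow hvol (by positivity)
      _ = (ENNReal.ofReal (u ^ p)) ^ (1/p) * K ^ (1/p) :=
          ENNReal.mul_rpow_of_nonneg _ _ (by positivity)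
      _ = ENNReal.ofReal u * K ^ (1/p) := by
          rw [ENNReal.ofReal_rpow_of_pos (Real.rpow_pos_of_pos hu p),
            ← Real.rpow_mul hu.le, mul_one_div_cancel hp.ne', Real.rpow_one]
  calc ENNReal.ofReal l * (volume E) ^ (1/p)
      ≤ ENNReal.ofReal l * (ENNReal.ofReal u * K ^ (1/p)) := mul_le_mul_right hrpow _
    _ = ENNReal.ofReal (l * u) * K ^ (1/p) := by
        rw [ENNReal.ofReal_mul hl.le, mul_assoc]
    _ = ENNReal.ofReal m * K ^ (1/p) := by
        rw [hu_def, mul_comm l, div_mul_cancel₀ m hl.ne']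
    _ ≤ ENNReal.ofReal m * ENNReal.ofReal C := mul_le_mul_right hKC _
    _ = ENNReal.ofReal C * M := by rw [mul_comm, hMm]
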